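/- Let $\{\wp(u):u\in\mathcal{U}\}$ satisfy $\wp(u)^*\wp(v)=\delta_{u,v}1$ with $\wp(u)=\sum_{p,q}\ell(p,q,u)\otimes e(p,q)$ and covariances $\ell(p,q,u)^*\ell(p,q,u)=d_p$ where $d_1+\cdots+d_r=1$, and let $P_q = 1\otimes e(q,q)$. Then for $Q_p = P_p - d_p\cdot 1$ one has $\wp(u)^*\,Q_p\,\wp(u) = 0$ for every $p$ and $u$. -/

import Mathlib

open ContinuousLinearMap

lemma op_eq_zero' {G : Type} [NormedAddCommGroup G] [InnerProductSpace ℂ G] [CompleteSpace G]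
    {ι : Type*} (v : ι → G)
    (hdense : (Submodule.span ℂ (Set.range v)).topologicalClosure = ⊤)
    (T : G →L[ℂ] G) (h : ∀ i j, (inner ℂ (v i) (T (v j)) : ℂ) = 0) : T = 0 := by
  have hK : (Submodule.span ℂ (Set.range v))ᗮ = ⊥ :=
    Submodule.topologicalClosure_eq_top_iff.mp hdense
  have hz : ∀ j, T (v j) = 0 := by
    intro j
    have hmem : T (v j) ∈ (Submodule.span ℂ (Set.range v))ᗮ := by
      rw [Submodule.mem_orthogonal]
      intro x hx
      induction hx using Submodule.span_induction with
      | mem x hx => obtain ⟨i, rfl⟩ := hx; exact h i j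
      | zero => simp
      | add x y _ _ hx hy => rw [inner_add_left, hx, hy, add_zero]
      | smul c x _ hx => rw [inner_smul_left, hx, mul_zero]
    simpa [hK] using hmem
  have hd : Dense ((Submodule.span ℂ (Set.range v)) : Set G) := by
    rw [← Submodule.dense_iff_topologicalClosure_eq_top] at hdense
    exact hdense
  apply ContinuousLinearMap.ext_on hd
  rintro x ⟨j, rfl⟩
  simp [hz j]

/-- In the model `𝓕(𝓗) ⊗ ℂ^r` (Hilbert space `G` with orthonormal basis
`eG` indexed by pairs (word of letters `e(p,q,u)`, basis index of `ℂ^r`)), let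
`ℓ(p,q,u) ⊗ e(p,q)` be modeled by `L p q u`, with covariances `ℓ(p,q,u)*ℓ(p,q,u) = d_p`,
`d₁ + ⋯ + d_r = 1`, let `℘(u) = ∑_{p,q} L p q u` and `P_q = 1 ⊗ e(q,q)`.  Then for
`Q_p = P_p - d_p·1` one has `℘(u)* Q_p ℘(u) = 0` for every `p` and `u`. -/
theorem stmt3 {G : Type} [NormedAddCommGroup G] [InnerProductSpace ℂ G] [CompleteSpace G]
    (r t : ℕ) (d : Fin r → ℝ) (hd0 : ∀ p, 0 ≤ d p) (hd1 : ∑ p, d p = 1)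
    (eG : List (Fin r × Fin r × Fin t) × Fin r → G) (heG : Orthonormal ℂ eG)
    (hdense : (Submodule.span ℂ (Set.range eG)).topologicalClosure = ⊤)
    (L : Fin r → Fin r → Fin t → G →L[ℂ] G)
    (hL : ∀ p q u w j, L p q u (eG (w, j)) =
      if j = q then (Real.sqrt (d p) : ℂ) • eG ((p, q, u) :: w, p) else 0)
    (P : Fin r → G →L[ℂ] G)
    (hP : ∀ q w j, P q (eG (w, j)) = if j = q then eG (w, j) else 0)
    (w : Fin t → G →L[ℂ] G) (hw : ∀ u, w u = ∑ p, ∑ q, L p q u) :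
    ∀ p u, adjoint (w u) * (P p - (d p : ℂ) • (1 : G →L[ℂ] G)) * w u = 0 := by
  intro p u
  have horth : ∀ i j, (inner ℂ (eG i) (eG j) : ℂ) = if i = j then 1 else 0 :=
    orthonormal_iff_ite.mp heG
  have hwapp : ∀ ws js, w u (eG (ws, js)) =
      ∑ a, (Real.sqrt (d a) : ℂ) • eG ((a, js, u) :: ws, a) := by
    intro ws js
    rw [hw]
    simp only [ContinuousLinearMap.sum_apply, hL]
    refine Finset.sum_congr rfl fun a _ => ?_
    rw [Finset.sum_ite_eq]
    simp
  apply op_eq_zero' eG hdense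
  rintro ⟨w1, j1⟩ ⟨w2, j2⟩
  rw [ContinuousLinearMap.mul_apply, ContinuousLinearMap.mul_apply,
    ContinuousLinearMap.adjoint_inner_right]
  rw [hwapp, hwapp]
  rw [ContinuousLinearMap.sub_apply, ContinuousLinearMap.smul_apply,
    ContinuousLinearMap.one_apply]
  rw [map_sum]
  simp only [map_smul, hP]
  rw [show (∑ b, (Real.sqrt (d b) : ℂ) • if b = p then eG ((b, j2, u) :: w2, b) else 0)
      = (Real.sqrt (d p) : ℂ) • eG ((p, j2, u) :: w2, p) from by
    simp [smul_ite, Finset.sum_ite_eq']]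
  rw [inner_sub_right, inner_smul_right]
  simp only [sum_inner, inner_sum, inner_smul_left, inner_smul_right, horth,
    Complex.conj_ofReal]
  simp only [Prod.mk.injEq, List.cons.injEq, Prod.mk.injEq, and_true, true_and, and_self]
  have hsq : ∀ a : Fin r, (Real.sqrt (d a) : ℂ) * (Real.sqrt (d a) : ℂ) = (d a : ℂ) := by
    intro a
    rw [← Complex.ofReal_mul, Real.mul_self_sqrt (hd0 a)]
  have hd1' : (∑ a : Fin r, (d a : ℂ)) = 1 := by
    rw [← Complex.ofReal_sum, hd1, Complex.ofReal_one]
  by_cases hwj : w1 = w2 ∧ j1 = j2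
  · obtain ⟨rfl, rfl⟩ := hwj
    simp only [and_true, true_and, and_self, mul_ite, mul_one, mul_zero,
      Finset.sum_ite_eq', Finset.mem_univ, if_true, hsq]
    rw [hd1', mul_one, sub_self]
  · have h2 : ∀ x y : Fin r, ¬(((y = x ∧ j1 = j2) ∧ w1 = w2) ∧ y = x) := by
      intro x y h
      exact hwj ⟨h.1.2, h.1.1.2⟩
    simp only [h2, false_and, and_false, if_false, mul_zero, Finset.sum_const_zero,
      sub_zero, sub_self]
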